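/- Let 𝓗 = (H, ≼) be a loft premonoid. Then, up to ⊑_𝓗-equivalence, every ≼-non-unit of H has only finitely many minimal ≼-factorizations; that is, for every ≼-non-unit x the quotient of Z^m_𝓗(x) by ⊑_𝓗-equivalence is finite. -/

import Mathlib

open Pointwise

namespace FactPaper

/-- `u` is a `≼`-unit for the preorder-like relation `r` on a monoid. -/
def RUnit {M : Type*} [Monoid M] (r : M → M → Prop) (u : M) : Prop :=
  r u 1 ∧ r 1 u

/-- `u` is a `≼`-non-unit. -/
def RNonUnit {M : Type*} [Monoid M] (r : M → M → Prop) (u : M) : Prop :=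
  ¬ RUnit r u

/-- The strict part `≺` of the relation `r`. -/
def RLt {M : Type*} (r : M → M → Prop) (x y : M) : Prop :=
  r x y ∧ ¬ r y x

/-- `a` is a `≼`-irreducible. -/
def RIrred {M : Type*} [Monoid M] (r : M → M → Prop) (a : M) : Prop :=
  RNonUnit r a ∧
    ∀ y z : M, RNonUnit r y → RNonUnit r z → RLt r y a → RLt r z a → a ≠ y * z

/-- `a` is a `≼`-atom. -/
def RAtom {M : Type*} [Monoid M] (r : M → M → Prop) (a : M) : Prop :=
  RNonUnit r a ∧ ∀ y z : M, RNonUnit r y → RNonUnit r z → a ≠ y * z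

/-- `a` is a `≼`-quark. -/
def RQuark {M : Type*} [Monoid M] (r : M → M → Prop) (a : M) : Prop :=
  RNonUnit r a ∧ ¬ ∃ b : M, RNonUnit r b ∧ RLt r b a

/-- The divisibility preorder: `Dvd2 x y` iff `y ∈ M x M`. -/
def Dvd2 {M : Type*} [Monoid M] (x y : M) : Prop :=
  ∃ u v : M, y = u * x * v

/-- The restriction of a relation on `M` to a submonoid `K`. -/
def SubRel {M : Type*} [Monoid M] (r : M → M → Prop) (K : Submonoid M) (a b : K) : Prop :=
  r (a : M) (b : M)

/-- The preorder `⊑` on words induced by `r`: an injection of indices matching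
`r`-equivalent letters. -/
def WordLe {M : Type*} (r : M → M → Prop) (l m : List M) : Prop :=
  ∃ σ : Fin l.length ↪ Fin m.length,
    ∀ i : Fin l.length, r (l.get i) (m.get (σ i)) ∧ r (m.get (σ i)) (l.get i)

/-- `⊑`-equivalence of words. -/
def WordEquiv {M : Type*} (r : M → M → Prop) (l m : List M) : Prop :=
  WordLe r l m ∧ WordLe r m l

/-- `l` is a `≼`-factorization of `x`: a word of `≼`-irreducibles with product `x`. -/
def IsFac {M : Type*} [Monoid M] (r : M → M → Prop) (x : M) (l : List M) : Prop :=
  (∀ a ∈ l, RIrred r a) ∧ l.prod = x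

/-- `l` is a minimal `≼`-factorization of `x`: a `⊑`-minimal `≼`-factorization. -/
def IsMinFac {M : Type*} [Monoid M] (r : M → M → Prop) (x : M) (l : List M) : Prop :=
  IsFac r x l ∧ ∀ m : List M, IsFac r x m → WordLe r m l → WordLe r l m

/-- `l` is an atomic `≼`-factorization of `x`. -/
def IsAtomicFac {M : Type*} [Monoid M] (r : M → M → Prop) (x : M) (l : List M) : Prop :=
  (∀ a ∈ l, RAtom r a) ∧ l.prod = x

/-- `l` is a minimal atomic `≼`-factorization of `x`. -/
def IsMinAtomicFac {M : Type*} [Monoid M] (r : M → M → Prop) (x : M) (l : List M) : Prop :=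
  IsMinFac r x l ∧ ∀ a ∈ l, RAtom r a

/-- Every `≼`-non-unit is a non-empty product of `≼`-irreducibles. -/
def Factorable {M : Type*} [Monoid M] (r : M → M → Prop) : Prop :=
  ∀ x : M, RNonUnit r x →
    ∃ l : List M, l ≠ [] ∧ (∀ a ∈ l, RIrred r a) ∧ l.prod = x

/-- Every `≼`-non-unit is a non-empty product of `≼`-atoms. -/
def Atomic {M : Type*} [Monoid M] (r : M → M → Prop) : Prop :=
  ∀ x : M, RNonUnit r x →
    ∃ l : List M, l ≠ [] ∧ (∀ a ∈ l, RAtom r a) ∧ l.prod = x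

/-- The premonoid `(M, r)` is finitely generated up to units. -/
def IsFGU {M : Type*} [Monoid M] (r : M → M → Prop) : Prop :=
  ∃ A : Set M, A.Finite ∧
    Submonoid.closure
      {w : M | ∃ u a v : M, RUnit r u ∧ a ∈ A ∧ RUnit r v ∧ w = u * a * v} = ⊤

/-- The submonoid generated by the `∣_M`-divisors of `x` (ground monoid of the germ of a
premonoid at `x`). -/
def GermSub {M : Type*} [Monoid M] (x : M) : Submonoid M :=
  Submonoid.closure {y : M | Dvd2 y x}

/-- Membership in the smallest divisor-closed submonoid containing `x`. -/
inductive InDC {M : Type*} [Monoid M] (x : M) : M → Prop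
  | base : InDC x x
  | one : InDC x 1
  | mul {a b : M} : InDC x a → InDC x b → InDC x (a * b)
  | dvd {a b : M} : InDC x b → Dvd2 a b → InDC x a

/-- The smallest divisor-closed submonoid of `M` containing `x`. -/
def DCSub {M : Type*} [Monoid M] (x : M) : Submonoid M where
  carrier := {y : M | InDC x y}
  mul_mem' := fun ha hb => InDC.mul ha hb
  one_mem' := InDC.one

/-- `(M, r)` is a weakly positive monoid. -/
def WeaklyPositive {M : Type*} [Monoid M] (r : M → M → Prop) : Prop :=
  (∀ x u v : M, RUnit r u → RUnit r v → r (u * x * v) x) ∧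
    (∀ x a b : M, r x (a * x * b))

/-- `(M, r)` is locally of finite type (loft). -/
def IsLoft {M : Type*} [Monoid M] (r : M → M → Prop) : Prop :=
  ∀ x : M, RNonUnit r x →
    ∃ A : Set M, A.Finite ∧ A ⊆ {a : M | RIrred r a} ∧
      ∀ l : List M, IsFac r x l →
        ∃ m : List M, (∀ a ∈ m, a ∈ A) ∧ WordEquiv r l m

/-- `(M, r)` is BF-factorable. -/
def IsBFFactorable {M : Type*} [Monoid M] (r : M → M → Prop) : Prop :=
  ∀ x : M, RNonUnit r x →
    {n : ℕ | ∃ l : List M, IsFac r x l ∧ l.length = n}.Finite ∧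
      {n : ℕ | ∃ l : List M, IsFac r x l ∧ l.length = n}.Nonempty

/-- `(M, r)` is BmF-factorable. -/
def IsBmFFactorable {M : Type*} [Monoid M] (r : M → M → Prop) : Prop :=
  ∀ x : M, RNonUnit r x →
    {n : ℕ | ∃ l : List M, IsMinFac r x l ∧ l.length = n}.Finite ∧
      {n : ℕ | ∃ l : List M, IsMinFac r x l ∧ l.length = n}.Nonempty

/-- `(M, r)` is FF-factorable: modulo `⊑`-equivalence, every `≼`-non-unit has finitely
many (and at least one) `≼`-factorizations. -/
def IsFFFactorable {M : Type*} [Monoid M] (r : M → M → Prop) : Prop :=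
  ∀ x : M, RNonUnit r x →
    (∃ l : List M, IsFac r x l) ∧
      ∃ F : Set (List M), F.Finite ∧
        ∀ l : List M, IsFac r x l → ∃ m ∈ F, IsFac r x m ∧ WordEquiv r l m

/-- `(M, r)` is FmF-factorable. -/
def IsFmFFactorable {M : Type*} [Monoid M] (r : M → M → Prop) : Prop :=
  ∀ x : M, RNonUnit r x →
    (∃ l : List M, IsMinFac r x l) ∧
      ∃ F : Set (List M), F.Finite ∧
        ∀ l : List M, IsMinFac r x l → ∃ m ∈ F, IsMinFac r x m ∧ WordEquiv r l m

/-- `(M, r)` is FF-atomic. -/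
def IsFFAtomic {M : Type*} [Monoid M] (r : M → M → Prop) : Prop :=
  ∀ x : M, RNonUnit r x →
    (∃ l : List M, IsAtomicFac r x l) ∧
      ∃ F : Set (List M), F.Finite ∧
        ∀ l : List M, IsAtomicFac r x l → ∃ m ∈ F, IsAtomicFac r x m ∧ WordEquiv r l m

/-- `(M, r)` is FmF-atomic. -/
def IsFmFAtomic {M : Type*} [Monoid M] (r : M → M → Prop) : Prop :=
  ∀ x : M, RNonUnit r x →
    (∃ l : List M, IsMinAtomicFac r x l) ∧
      ∃ F : Set (List M), F.Finite ∧
        ∀ l : List M, IsMinAtomicFac r x l → ∃ m ∈ F, IsMinAtomicFac r x m ∧ WordEquiv r l m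


section Aux

variable {H : Type*} (r : H → H → Prop)

/-- The setoid of `r`-equivalence. -/
def eqvSetoid (hrefl : Reflexive r) (htrans : Transitive r) : Setoid H :=
  ⟨fun a b => r a b ∧ r b a,
    ⟨fun a => ⟨hrefl a, hrefl a⟩, fun h => ⟨h.2, h.1⟩,
      fun h h' => ⟨htrans h.1 h'.1, htrans h'.2 h.2⟩⟩⟩

variable {hrefl : Reflexive r} {htrans : Transitive r}

/-- Count of letters of `l` in class `q`. -/
noncomputable def cnt (s : Setoid H) (l : List H) (q : Quotient s) : ℕ :=
  Nat.card {i : Fin l.length // Quotient.mk s (l.get i) = q}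

theorem cnt_le_of_wordLe {s : Setoid H} (hs : s = eqvSetoid r hrefl htrans)
    {l m : List H} (h : WordLe r l m) (q : Quotient s) : cnt s l q ≤ cnt s m q := by
  subst hs
  obtain ⟨σ, hσ⟩ := h
  have key : ∀ i : {i : Fin l.length // Quotient.mk _ (l.get i) = q},
      Quotient.mk _ (m.get (σ i.1)) = q := fun i =>
    (Quotient.sound (⟨(hσ i.1).2, (hσ i.1).1⟩ :
      (eqvSetoid r hrefl htrans).r (m.get (σ i.1)) (l.get i.1))).trans i.2
  exact Nat.card_le_card_of_injective (fun i => ⟨σ i.1, key i⟩)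
    (fun i j hij => Subtype.ext (σ.injective (congrArg Subtype.val hij)))

theorem wordLe_of_cnt_le {s : Setoid H} (hs : s = eqvSetoid r hrefl htrans)
    {l m : List H} (h : ∀ q, cnt s l q ≤ cnt s m q) : WordLe r l m := by
  classical
  rcases Nat.eq_zero_or_pos l.length with hl | hl
  · refine ⟨⟨fun i => absurd i.2 (by omega), fun i => absurd i.2 (by omega)⟩,
      fun i => absurd i.2 (by omega)⟩
  · -- m is nonempty
    have hml : 0 < cnt s m (Quotient.mk s (l.get ⟨0, hl⟩)) := by
      refine lt_of_lt_of_le ?_ (h _)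
      have : Nonempty {i : Fin l.length // Quotient.mk s (l.get i) =
          Quotient.mk s (l.get ⟨0, hl⟩)} := ⟨⟨⟨0, hl⟩, rfl⟩⟩
      exact Nat.card_pos
    have hmne : Nonempty (Fin m.length) := by
      by_contra hcon
      rw [not_nonempty_iff] at hcon
      have : IsEmpty {j : Fin m.length // Quotient.mk s (m.get j) =
          Quotient.mk s (l.get ⟨0, hl⟩)} := ⟨fun j => hcon.elim j.1⟩
      rw [cnt, Nat.card_of_isEmpty] at hml
      omega
    obtain ⟨j0⟩ := hmne
    -- per-class embeddings
    have hemb : ∀ q : Quotient s,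
        Nonempty ({i : Fin l.length // Quotient.mk s (l.get i) = q} ↪
          {j : Fin m.length // Quotient.mk s (m.get j) = q}) := by
      intro q
      haveI := Fintype.ofFinite {i : Fin l.length // Quotient.mk s (l.get i) = q}
      haveI := Fintype.ofFinite {j : Fin m.length // Quotient.mk s (m.get j) = q}
      refine Function.Embedding.nonempty_of_card_le ?_
      have := h q
      rwa [cnt, cnt, Nat.card_eq_fintype_card, Nat.card_eq_fintype_card] at this
    have e : ∀ q : Quotient s, {i : Fin l.length // Quotient.mk s (l.get i) = q} ↪
        {j : Fin m.length // Quotient.mk s (m.get j) = q} := fun q => (hemb q).some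
    -- totalized per-class maps
    set e' : Quotient s → Fin l.length → Fin m.length := fun q i =>
      if hq : Quotient.mk s (l.get i) = q then ((e q) ⟨i, hq⟩).1 else j0 with he'
    have he'mem : ∀ q i (hq : Quotient.mk s (l.get i) = q),
        Quotient.mk s (m.get (e' q i)) = q := fun q i hq => by
      rw [he']; simp only [hq, dif_pos]; exact ((e q) ⟨i, hq⟩).2
    have he'inj : ∀ q i j (hi : Quotient.mk s (l.get i) = q)
        (hj : Quotient.mk s (l.get j) = q), e' q i = e' q j → i = j := by
      intro q i j hi hj hij
      rw [he'] at hij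
      simp only [hi, hj, dif_pos] at hij
      have := (e q).injective (Subtype.ext hij)
      exact congrArg Subtype.val this
    refine ⟨⟨fun i => e' (Quotient.mk s (l.get i)) i, ?_⟩, ?_⟩
    · intro i j hij
      simp only at hij
      have hqi := he'mem (Quotient.mk s (l.get i)) i rfl
      have hqj := he'mem (Quotient.mk s (l.get j)) j rfl
      have hq : Quotient.mk s (l.get i) = Quotient.mk s (l.get j) := by
        rw [← hqi, ← hqj, hij]
      rw [hq] at hij
      exact he'inj _ i j hq rfl hij
    · intro i
      have := he'mem (Quotient.mk s (l.get i)) i rfl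
      subst hs
      have h2 := Quotient.exact this
      exact ⟨h2.2, h2.1⟩


end Aux

/-- Theorem 4.11(ii). In a loft premonoid, every `≼`-non-unit has,
up to `⊑`-equivalence, only finitely many minimal `≼`-factorizations. -/
theorem stmt11 {H : Type*} [Monoid H] (r : H → H → Prop)
    (hrefl : Reflexive r) (htrans : Transitive r) (hloft : IsLoft r) :
    ∀ x : H, RNonUnit r x →
      ∃ F : Set (List H), F.Finite ∧
        ∀ l : List H, IsMinFac r x l → ∃ m ∈ F, IsMinFac r x m ∧ WordEquiv r l m := by
  classical
  intro x hx
  obtain ⟨A, hAfin, hAirr, hAcov⟩ := hloft x hx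
  set s : Setoid H := eqvSetoid r hrefl htrans with hs
  have hcover : ∀ l : List H, IsFac r x l → ∀ i : Fin l.length,
      ∃ a ∈ A, Quotient.mk s (l.get i) = Quotient.mk s a := by
    intro l hl i
    obtain ⟨m, hmA, hlm, _⟩ := hAcov l hl
    obtain ⟨σ, hσ⟩ := hlm
    refine ⟨m.get (σ i), hmA _ (m.get_mem _), ?_⟩
    exact Quotient.sound (⟨(hσ i).1, (hσ i).2⟩ : s.r _ _)
  have hkey : ∀ l l' : List H, IsFac r x l → IsFac r x l' →
      (∀ a ∈ A, cnt s l (Quotient.mk s a) ≤ cnt s l' (Quotient.mk s a)) →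
      ∀ q, cnt s l q ≤ cnt s l' q := by
    intro l l' hl hl' hle q
    by_cases hq : ∃ i : Fin l.length, Quotient.mk s (l.get i) = q
    · obtain ⟨i, hi⟩ := hq
      obtain ⟨a, haA, hia⟩ := hcover l hl i
      rw [← hi, hia]
      exact hle a haA
    · have : IsEmpty {i : Fin l.length // Quotient.mk s (l.get i) = q} :=
        ⟨fun i => hq ⟨i.1, i.2⟩⟩
      simp [cnt, Nat.card_of_isEmpty]
  let Afin := hAfin.toFinset
  let g : List H → (↥Afin → ℕ) := fun l a => cnt s l (Quotient.mk s (a : H))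
  have hgA : ∀ l l', IsFac r x l → IsFac r x l' → g l ≤ g l' →
      ∀ q, cnt s l q ≤ cnt s l' q := by
    intro l l' hl hl' hg
    refine hkey l l' hl hl' fun a ha => ?_
    exact hg ⟨a, hAfin.mem_toFinset.mpr ha⟩
  let T : Set (↥Afin → ℕ) := {f | ∃ l, IsMinFac r x l ∧ g l = f}
  have hanti : IsAntichain (· ≤ ·) T := by
    rintro t ⟨l, hl, rfl⟩ t' ⟨l', hl', rfl⟩ hne hle
    have h1 : ∀ q, cnt s l q ≤ cnt s l' q := hgA l l' hl.1 hl'.1 hle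
    have h2 : WordLe r l l' := wordLe_of_cnt_le r hs h1
    have h3 : WordLe r l' l := hl'.2 l hl.1 h2
    have h4 : ∀ q, cnt s l' q ≤ cnt s l q := fun q => cnt_le_of_wordLe r hs h3 q
    exact hne (le_antisymm hle fun a => h4 _)
  have hTfin : T.Finite := hanti.finite_of_partiallyWellOrderedOn
    (Set.isPWO_of_wellQuasiOrderedLE T)
  let rep : (↥Afin → ℕ) → List H := fun t =>
    if h : ∃ l, IsMinFac r x l ∧ g l = t then h.choose else []
  refine ⟨rep '' T, hTfin.image rep, ?_⟩
  intro l hl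
  have hex : ∃ l', IsMinFac r x l' ∧ g l' = g l := ⟨l, hl, rfl⟩
  have hrep : rep (g l) = hex.choose := dif_pos hex
  obtain ⟨hm1, hm2⟩ := hex.choose_spec
  have hc : ∀ a ∈ A, cnt s hex.choose (Quotient.mk s a) = cnt s l (Quotient.mk s a) := by
    intro a ha
    exact congrFun hm2 ⟨a, hAfin.mem_toFinset.mpr ha⟩
  have hlm : ∀ q, cnt s l q ≤ cnt s hex.choose q :=
    hkey l hex.choose hl.1 hm1.1 fun a ha => (hc a ha).ge
  have hml : ∀ q, cnt s hex.choose q ≤ cnt s l q :=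
    hkey hex.choose l hm1.1 hl.1 fun a ha => (hc a ha).le
  refine ⟨rep (g l), ⟨g l, ⟨l, hl, rfl⟩, rfl⟩, ?_, ?_⟩
  · rw [hrep]; exact hm1
  · rw [hrep]
    exact ⟨wordLe_of_cnt_le r hs hlm, wordLe_of_cnt_le r hs hml⟩

end FactPaper
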